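/- Let ℋ be a complex Hilbert space, H ≥ 0 self-adjoint, P a bounded operator on ℋ, and f ∈ C^∞(H) := ⋂_{l≥1} dom(H^l). Then for every t > 0 one has Φ^H_t(P)f ∈ dom(H) and H Φ^H_t(P) f = − e^{-tH} P f + Φ^H_t(PH) f + P e^{-tH} f, where Φ^H_t(PH)f := ∫_0^t e^{-sH} P H e^{-(t−s)H} f ds. Consequently, Φ^H_t(P)f ∈ dom(H²) if and only if P e^{-tH} f ∈ dom(H). -/

import Mathlib

/-!
Statement 8: Let `H ≥ 0` be self-adjoint in a complex Hilbert space `ℋ`, `P` a bounded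
operator and `f ∈ C^∞(H) = ⋂_l dom(H^l)`. Then for every `t > 0` one has
`Φ^H_t(P) f ∈ dom(H)` and
`H Φ^H_t(P) f = - e^{-tH} P f + Φ^H_t(PH) f + P e^{-tH} f`,
where `Φ^H_t(P) f = ∫_0^t e^{-sH} P e^{-(t-s)H} f ds` and
`Φ^H_t(PH) f = ∫_0^t e^{-sH} P H e^{-(t-s)H} f ds`.  Consequently,
`Φ^H_t(P) f ∈ dom(H²)` if and only if `P e^{-tH} f ∈ dom(H)`.
-/

noncomputable section

open MeasureTheory Filter

/-- The spectral calculus data of a nonnegative self-adjoint operator `H` in a complex Hilbert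
space: the heat semigroup `expH t = e^{-tH}` (for `t ≥ 0`) and the fractional powers of the
resolvent `res a = (H+1)^{-a}` (for `a > 0`), together with their defining properties. -/
structure NonnegSelfAdjointCalculus (𝓗 : Type*) [NormedAddCommGroup 𝓗]
    [InnerProductSpace ℂ 𝓗] [CompleteSpace 𝓗] where
  /-- the (generally unbounded) operator `H` -/
  H : 𝓗 →ₗ.[ℂ] 𝓗
  /-- `H` is self-adjoint (in particular densely defined) -/
  selfAdjoint : IsSelfAdjoint H
  /-- `H ≥ 0` -/
  nonneg : ∀ x : H.domain, 0 ≤ (inner ℂ (H x) (x : 𝓗) : ℂ).re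
  /-- the heat semigroup `e^{-tH}` of `H`, defined by spectral calculus -/
  expH : ℝ → 𝓗 →L[ℂ] 𝓗
  expH_zero : expH 0 = 1
  expH_add : ∀ s t : ℝ, 0 ≤ s → 0 ≤ t → expH (s + t) = (expH s).comp (expH t)
  /-- `e^{-tH}` is a contraction -/
  expH_norm : ∀ t : ℝ, 0 ≤ t → ‖expH t‖ ≤ 1
  /-- smoothing property: `e^{-tH}` maps into `dom H` for `t > 0` -/
  expH_mem_domain : ∀ t : ℝ, 0 < t → ∀ x : 𝓗, expH t x ∈ H.domain
  /-- strong continuity -/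
  expH_continuous : ∀ x : 𝓗, ContinuousOn (fun t : ℝ => expH t x) (Set.Ici 0)
  /-- `-H` is the generator of `e^{-tH}` -/
  expH_deriv : ∀ x : H.domain,
    HasDerivWithinAt (fun t : ℝ => expH t (x : 𝓗)) (-(H x)) (Set.Ici 0) 0
  /-- the fractional powers `(H+1)^{-a}` of the resolvent of `H`, defined by spectral
  calculus -/
  res : ℝ → 𝓗 →L[ℂ] 𝓗
  res_add : ∀ a b : ℝ, 0 < a → 0 < b → res (a + b) = (res a).comp (res b)
  res_norm : ∀ a : ℝ, 0 < a → ‖res a‖ ≤ 1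
  res_one_mem_domain : ∀ x : 𝓗, res 1 x ∈ H.domain
  /-- `res 1` is the resolvent `(H+1)^{-1}` -/
  res_one_spec : ∀ x : 𝓗, H ⟨res 1 x, res_one_mem_domain x⟩ + res 1 x = x
  res_comm_expH : ∀ a t : ℝ, (res a).comp (expH t) = (expH t).comp (res a)

/-- membership of `x` in the domain of the `l`-th power of the (generally unbounded)
operator `H`; `C^∞(H) = ⋂_l dom(H^l)` is then described by `∀ l, IterMem H l x`. -/
def LinearPMap.IterMem {𝓗 : Type*} [NormedAddCommGroup 𝓗] [InnerProductSpace ℂ 𝓗]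
    (H : 𝓗 →ₗ.[ℂ] 𝓗) : ℕ → 𝓗 → Prop
  | 0, _ => True
  | l + 1, x => ∃ h : x ∈ H.domain, H.IterMem l (H ⟨x, h⟩)

variable {𝓗 : Type*} [NormedAddCommGroup 𝓗] [InnerProductSpace ℂ 𝓗] [CompleteSpace 𝓗]


namespace NonnegSelfAdjointCalculus
open Topology

variable {𝓗 : Type*} [NormedAddCommGroup 𝓗] [InnerProductSpace ℂ 𝓗] [CompleteSpace 𝓗]
variable (D : NonnegSelfAdjointCalculus 𝓗)

lemma expH_apply_norm_le {t : ℝ} (ht : 0 ≤ t) (x : 𝓗) : ‖D.expH t x‖ ≤ ‖x‖ := by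
  simpa using (D.expH t).le_of_opNorm_le (D.expH_norm t ht) x

lemma H_res_one (x : 𝓗) : D.H ⟨D.res 1 x, D.res_one_mem_domain x⟩ = x - D.res 1 x :=
  eq_sub_of_add_eq (D.res_one_spec x)

lemma inj {z : D.H.domain} (h : D.H z + (z : 𝓗) = 0) : (z : 𝓗) = 0 := by
  have h1 : (inner ℂ (D.H z + (z : 𝓗)) (z : 𝓗) : ℂ) = 0 := by rw [h, inner_zero_left]
  rw [inner_add_left] at h1
  have h2 := D.nonneg z
  have h3 : ((inner ℂ (D.H z) (z : 𝓗) : ℂ) + inner ℂ (z : 𝓗) (z : 𝓗)).re = 0 := by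
    rw [h1]; simp
  rw [Complex.add_re] at h3
  have h4 : (inner ℂ (z : 𝓗) (z : 𝓗) : ℂ).re = ‖(z : 𝓗)‖ ^ 2 := by
    have := inner_self_eq_norm_sq (𝕜 := ℂ) (z : 𝓗)
    rwa [RCLike.re_to_complex] at this
  have h5 : ‖(z : 𝓗)‖ ^ 2 ≤ 0 := by linarith
  have h6 : ‖(z : 𝓗)‖ = 0 := by nlinarith [norm_nonneg (z : 𝓗)]
  exact norm_eq_zero.mp h6

lemma res_one_H_add (y : D.H.domain) : D.res 1 (D.H y + (y : 𝓗)) = (y : 𝓗) := by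
  set x : 𝓗 := D.H y + (y : 𝓗) with hx
  set z : D.H.domain := ⟨D.res 1 x, D.res_one_mem_domain x⟩ - y with hz
  have hz' : (z : 𝓗) = D.res 1 x - (y : 𝓗) := rfl
  have h1 : D.H z = x - D.res 1 x - D.H y := by
    rw [hz, LinearPMap.map_sub, D.H_res_one]
  have h0 : D.H z + (z : 𝓗) = 0 := by
    rw [h1, hz', hx]; abel
  have := D.inj h0
  rw [hz'] at this
  exact sub_eq_zero.mp this

lemma mem_of_res {x y : 𝓗} (h : D.res 1 (y + x) = x) :
    ∃ hx : x ∈ D.H.domain, D.H ⟨x, hx⟩ = y := by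
  have hx : x ∈ D.H.domain := h ▸ D.res_one_mem_domain (y + x)
  refine ⟨hx, ?_⟩
  have e : D.H ⟨x, hx⟩ = D.H ⟨D.res 1 (y + x), D.res_one_mem_domain _⟩ := by
    congr 1; exact Subtype.ext h.symm
  rw [e, D.H_res_one, h]; abel

lemma res_comm_apply (a t : ℝ) (x : 𝓗) : D.res a (D.expH t x) = D.expH t (D.res a x) :=
  DFunLike.congr_fun (D.res_comm_expH a t) x

lemma expH_comm_H (τ : ℝ) {y : 𝓗} (hy : y ∈ D.H.domain) :
    ∃ h : D.expH τ y ∈ D.H.domain, D.H ⟨D.expH τ y, h⟩ = D.expH τ (D.H ⟨y, hy⟩) := by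
  set x : 𝓗 := D.H ⟨y, hy⟩ + y with hx
  have hry : D.res 1 x = y := D.res_one_H_add ⟨y, hy⟩
  have key : D.expH τ y = D.res 1 (D.expH τ x) := by rw [D.res_comm_apply, hry]
  have hmem : D.expH τ y ∈ D.H.domain := key ▸ D.res_one_mem_domain _
  refine ⟨hmem, ?_⟩
  have e1 : D.H ⟨D.expH τ y, hmem⟩ = D.H ⟨D.res 1 (D.expH τ x), D.res_one_mem_domain _⟩ := by
    congr 1; exact Subtype.ext key
  rw [e1, D.H_res_one, ← key, hx, map_add]; abel

lemma tendsto_expH {α : Type*} {l : Filter α} {τ : α → ℝ} {c : ℝ} (hc0 : 0 ≤ c)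
    (hτ : Tendsto τ l (𝓝 c)) (hτ0 : ∀ᶠ a in l, 0 ≤ τ a)
    {y : α → 𝓗} {y₀ : 𝓗} (hy : Tendsto y l (𝓝 y₀)) :
    Tendsto (fun a => D.expH (τ a) (y a)) l (𝓝 (D.expH c y₀)) := by
  have hA : Tendsto (fun a => D.expH (τ a) (y a - y₀)) l (𝓝 0) := by
    apply squeeze_zero_norm' (hτ0.mono fun a ha => D.expH_apply_norm_le ha _)
    have := (hy.sub_const y₀).norm
    simpa using this
  have hB : Tendsto (fun a => D.expH (τ a) y₀) l (𝓝 (D.expH c y₀)) :=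
    Filter.Tendsto.comp (D.expH_continuous y₀ c hc0) (tendsto_nhdsWithin_iff.mpr ⟨hτ, hτ0⟩)
  have hAB := hA.add hB
  rw [zero_add] at hAB
  refine hAB.congr fun a => ?_
  rw [← map_add]
  congr 1
  abel

lemma hasDerivWithinAt_expH {y : 𝓗} (hy : y ∈ D.H.domain) {τ₀ : ℝ} (hτ₀ : 0 ≤ τ₀) :
    HasDerivWithinAt (fun τ => D.expH τ y) (-(D.expH τ₀ (D.H ⟨y, hy⟩)))
      (Set.Ici 0) τ₀ := by
  set Hy := D.H ⟨y, hy⟩ with hHy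
  set q : ℝ → 𝓗 := fun h => h⁻¹ • (D.expH h y - y) with hq_def
  have hq : Tendsto q (𝓝[Set.Ioi 0] (0:ℝ)) (𝓝 (-Hy)) := by
    have h0 := D.expH_deriv ⟨y, hy⟩
    rw [hasDerivWithinAt_iff_tendsto_slope, Set.Ici_sdiff_left] at h0
    refine h0.congr fun s => ?_
    rw [slope_def_module]
    simp [hq_def, D.expH_zero]
  rw [hasDerivWithinAt_iff_tendsto_slope]
  have key : ∀ s ∈ Set.Ici (0:ℝ) \ {τ₀}, slope (fun τ => D.expH τ y) τ₀ s
      = D.expH (min s τ₀) (q |s - τ₀|) := by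
    rintro s ⟨hs0, hsne⟩
    rcases lt_or_gt_of_ne (hsne : s ≠ τ₀) with hlt | hgt
    · rw [min_eq_left hlt.le, abs_of_neg (by linarith : s - τ₀ < 0), neg_sub]
      rw [slope_def_module, hq_def]
      have hcomp : D.expH s (D.expH (τ₀ - s) y) = D.expH τ₀ y := by
        have := D.expH_add s (τ₀ - s) hs0 (by linarith)
        rw [show s + (τ₀ - s) = τ₀ by ring] at this
        rw [this]; rfl
      rw [ContinuousLinearMap.map_smul_of_tower, map_sub, hcomp]
      rw [show (s - τ₀)⁻¹ = -(τ₀ - s)⁻¹ by rw [neg_inv, neg_sub], neg_smul, ← smul_neg,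
        neg_sub]
    · rw [min_eq_right hgt.le, abs_of_pos (by linarith : 0 < s - τ₀)]
      rw [slope_def_module, hq_def]
      have hcomp : D.expH τ₀ (D.expH (s - τ₀) y) = D.expH s y := by
        have := D.expH_add τ₀ (s - τ₀) hτ₀ (by linarith)
        rw [show τ₀ + (s - τ₀) = s by ring] at this
        rw [this]; rfl
      rw [ContinuousLinearMap.map_smul_of_tower, map_sub, hcomp]
  have htend : Tendsto (fun s => D.expH (min s τ₀) (q |s - τ₀|))
      (𝓝[Set.Ici 0 \ {τ₀}] τ₀) (𝓝 (D.expH τ₀ (-Hy))) := by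
    apply D.tendsto_expH hτ₀
    · have h1 : Tendsto (fun s : ℝ => min s τ₀) (nhds τ₀) (nhds (min τ₀ τ₀)) :=
        (continuous_id.min continuous_const).tendsto τ₀
      rw [min_self] at h1
      exact h1.mono_left nhdsWithin_le_nhds
    · filter_upwards [self_mem_nhdsWithin] with s hs
      exact le_min hs.1 hτ₀
    · apply hq.comp
      rw [tendsto_nhdsWithin_iff]
      constructor
      · have h1 : Tendsto (fun s : ℝ => |s - τ₀|) (nhds τ₀) (nhds |τ₀ - τ₀|) :=
          ((continuous_id.sub continuous_const).abs).tendsto τ₀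
        simp only [sub_self, abs_zero] at h1
        exact h1.mono_left nhdsWithin_le_nhds
      · filter_upwards [self_mem_nhdsWithin] with s hs
        exact abs_pos.mpr (sub_ne_zero.mpr hs.2)
  rw [map_neg] at htend
  exact htend.congr'
    (Filter.eventuallyEq_of_mem self_mem_nhdsWithin fun s hs => (key s hs).symm)

lemma hasDerivWithinAt_expH_comp {S : Set ℝ} (hS : S ⊆ Set.Ici 0) {v : ℝ → 𝓗} {v' : 𝓗}
    {s₀ : ℝ} (hs₀ : 0 ≤ s₀) (hx : v s₀ ∈ D.H.domain) (hv : HasDerivWithinAt v v' S s₀) :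
    HasDerivWithinAt (fun s => D.expH s (v s))
      (D.expH s₀ v' - D.expH s₀ (D.H ⟨v s₀, hx⟩)) S s₀ := by
  have h2 : HasDerivWithinAt (fun s => D.expH s (v s₀))
      (-(D.expH s₀ (D.H ⟨v s₀, hx⟩))) S s₀ :=
    (D.hasDerivWithinAt_expH hx hs₀).mono hS
  have h1 : HasDerivWithinAt (fun s => D.expH s (v s - v s₀)) (D.expH s₀ v') S s₀ := by
    rw [hasDerivWithinAt_iff_tendsto_slope] at hv ⊢
    have ht : Tendsto (fun s => D.expH s (slope v s₀ s)) (𝓝[S \ {s₀}] s₀)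
        (𝓝 (D.expH s₀ v')) := by
      apply D.tendsto_expH hs₀
      · exact tendsto_id'.mpr nhdsWithin_le_nhds
      · filter_upwards [self_mem_nhdsWithin] with s hs
        exact hS hs.1
      · exact hv
    refine ht.congr' (Filter.eventuallyEq_of_mem self_mem_nhdsWithin fun s hs => ?_)
    rw [slope_def_module, slope_def_module, sub_self, map_zero, sub_zero, ContinuousLinearMap.map_smul_of_tower]
  have heq : (fun s => D.expH s (v s))
      = fun s => D.expH s (v s - v s₀) + D.expH s (v s₀) := by
    funext s
    rw [← map_add]
    congr 1
    abel
  rw [heq]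
  have h12 := h1.add h2
  rw [← sub_eq_add_neg] at h12
  exact h12

lemma continuousOn_expH_comp {S : Set ℝ} (hS : S ⊆ Set.Ici 0) {v : ℝ → 𝓗}
    (hv : ContinuousOn v S) : ContinuousOn (fun s => D.expH s (v s)) S := by
  intro s₀ hs₀
  exact D.tendsto_expH (hS hs₀) (tendsto_id'.mpr nhdsWithin_le_nhds)
    (Filter.eventually_of_mem self_mem_nhdsWithin fun s hs => hS hs) (hv s₀ hs₀)

lemma main (P : 𝓗 →L[ℂ] 𝓗) {f : 𝓗} (hf : f ∈ D.H.domain) {t : ℝ} (ht : 0 < t) :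
    ∃ h1 : (∫ s in (0:ℝ)..t, D.expH s (P (D.expH (t - s) f))) ∈ D.H.domain,
      D.H ⟨∫ s in (0:ℝ)..t, D.expH s (P (D.expH (t - s) f)), h1⟩ =
        -(D.expH t (P f)) +
          (∫ s in (0:ℝ)..t, D.expH s (P (D.expH (t - s) (D.H ⟨f, hf⟩)))) +
          P (D.expH t f) := by
  set Hf := D.H ⟨f, hf⟩ with hHf
  set r := D.res 1 with hr
  set F : ℝ → 𝓗 := fun s => D.expH s (P (D.expH (t - s) f)) with hF
  set G : ℝ → 𝓗 := fun s => D.expH s (P (D.expH (t - s) Hf)) with hG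
  set w : ℝ → 𝓗 := fun s => r (P (D.expH (t - s) f)) with hw
  set Ψ : ℝ → 𝓗 := fun s => D.expH s (w s) with hΨ
  have hIcc : Set.Icc (0:ℝ) t ⊆ Set.Ici 0 := fun s hs => hs.1
  have hmapsTo : Set.MapsTo (fun s : ℝ => t - s) (Set.Icc (0:ℝ) t) (Set.Ici 0) :=
    fun s hs => sub_nonneg.mpr hs.2
  have hu : ContinuousOn (fun s : ℝ => D.expH (t - s) f) (Set.Icc 0 t) :=
    (D.expH_continuous f).comp ((continuous_const.sub continuous_id).continuousOn) hmapsTo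
  have huH : ContinuousOn (fun s : ℝ => D.expH (t - s) Hf) (Set.Icc 0 t) :=
    (D.expH_continuous Hf).comp ((continuous_const.sub continuous_id).continuousOn) hmapsTo
  have hFc : ContinuousOn F (Set.Icc 0 t) :=
    D.continuousOn_expH_comp hIcc (P.continuous.comp_continuousOn hu)
  have hGc : ContinuousOn G (Set.Icc 0 t) :=
    D.continuousOn_expH_comp hIcc (P.continuous.comp_continuousOn huH)
  have hwc : ContinuousOn w (Set.Icc 0 t) :=
    r.continuous.comp_continuousOn (P.continuous.comp_continuousOn hu)
  have hΨc : ContinuousOn Ψ (Set.Icc 0 t) := D.continuousOn_expH_comp hIcc hwc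
  have hΨF : ∀ s, Ψ s = r (F s) := fun s => (D.res_comm_apply 1 s _).symm
  have hderiv : ∀ s₀ ∈ Set.Icc (0:ℝ) t,
      HasDerivWithinAt Ψ (r (G s₀) - F s₀ + Ψ s₀) (Set.Icc 0 t) s₀ := by
    intro s₀ hs₀
    have hts₀ : (0:ℝ) ≤ t - s₀ := sub_nonneg.mpr hs₀.2
    have hbase : HasDerivWithinAt (fun τ => D.expH τ f) (-(D.expH (t - s₀) Hf))
        (Set.Ici 0) (t - s₀) := D.hasDerivWithinAt_expH hf hts₀
    have hinner : HasDerivWithinAt (fun s : ℝ => t - s) (-1) (Set.Icc 0 t) s₀ :=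
      (hasDerivWithinAt_id s₀ _).const_sub t
    have hu' : HasDerivWithinAt (fun s : ℝ => D.expH (t - s) f) (D.expH (t - s₀) Hf)
        (Set.Icc 0 t) s₀ := by
      have hc := hbase.scomp s₀ hinner hmapsTo
      simpa [Function.comp_def] using hc
    have hw' : HasDerivWithinAt w (r (P (D.expH (t - s₀) Hf))) (Set.Icc 0 t) s₀ := by
      have hc := ((r.comp P).restrictScalars ℝ).hasFDerivAt.comp_hasDerivWithinAt s₀ hu'
      simpa [hw, Function.comp_def] using hc
    have hwmem : w s₀ ∈ D.H.domain := D.res_one_mem_domain _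
    have hD := D.hasDerivWithinAt_expH_comp hIcc hs₀.1 hwmem hw'
    have e2 : D.H ⟨w s₀, hwmem⟩ = P (D.expH (t - s₀) f) - w s₀ :=
      D.H_res_one (P (D.expH (t - s₀) f))
    rw [e2] at hD
    have efin : r (G s₀) - F s₀ + Ψ s₀
        = D.expH s₀ (r (P (D.expH (t - s₀) Hf)))
          - D.expH s₀ (P (D.expH (t - s₀) f) - w s₀) := by
      rw [map_sub, hG, hF, hΨ]
      simp only []
      rw [D.res_comm_apply]
      abel
    rw [hΨ]
    rw [efin]
    exact hD
  have hderiv' : ∀ s ∈ Set.Ioo (0:ℝ) t,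
      HasDerivWithinAt Ψ (r (G s) - F s + Ψ s) (Set.Ioi s) s :=
    fun s hs => (hderiv s (Set.Ioo_subset_Icc_self hs)).mono_of_mem_nhdsWithin
      (nhdsWithin_le_nhds (Icc_mem_nhds hs.1 hs.2))
  have hiG : IntervalIntegrable G volume 0 t :=
    ContinuousOn.intervalIntegrable (by rwa [Set.uIcc_of_le ht.le])
  have hiF : IntervalIntegrable F volume 0 t :=
    ContinuousOn.intervalIntegrable (by rwa [Set.uIcc_of_le ht.le])
  have hiPsi : IntervalIntegrable Ψ volume 0 t :=
    ContinuousOn.intervalIntegrable (by rwa [Set.uIcc_of_le ht.le])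
  have hirG : IntervalIntegrable (fun s => r (G s)) volume 0 t :=
    ContinuousOn.intervalIntegrable (by
      rw [Set.uIcc_of_le ht.le]
      exact r.continuous.comp_continuousOn hGc)
  have hint : IntervalIntegrable (fun s => r (G s) - F s + Ψ s) volume 0 t :=
    (hirG.sub hiF).add hiPsi
  have hFTC := intervalIntegral.integral_eq_sub_of_hasDeriv_right_of_le ht.le hΨc hderiv' hint
  have hsplit : (∫ s in (0:ℝ)..t, (r (G s) - F s + Ψ s))
      = r (∫ s in (0:ℝ)..t, G s) - (∫ s in (0:ℝ)..t, F s)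
        + r (∫ s in (0:ℝ)..t, F s) := by
    rw [intervalIntegral.integral_add (hirG.sub hiF) hiPsi,
      intervalIntegral.integral_sub hirG hiF,
      r.intervalIntegral_comp_comm hiG]
    congr 1
    rw [show Ψ = fun s => r (F s) from funext hΨF, r.intervalIntegral_comp_comm hiF]
  have hPsit : Ψ t = r (D.expH t (P f)) := by
    rw [hΨF t, hF]
    simp [sub_self, D.expH_zero]
  have hPsi0 : Ψ 0 = r (P (D.expH t f)) := by
    rw [hΨF 0, hF]
    simp [D.expH_zero]
  rw [hsplit, hPsit, hPsi0] at hFTC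
  have hres : r ((-(D.expH t (P f)) + (∫ s in (0:ℝ)..t, G s) + P (D.expH t f))
      + ∫ s in (0:ℝ)..t, F s) = ∫ s in (0:ℝ)..t, F s := by
    have h3 : r (∫ s in (0:ℝ)..t, G s) + r (∫ s in (0:ℝ)..t, F s)
        - (r (D.expH t (P f)) - r (P (D.expH t f))) = ∫ s in (0:ℝ)..t, F s := by
      rw [← hFTC]; abel
    simp only [map_add, map_neg]
    conv_rhs => rw [← h3]
    abel
  exact D.mem_of_res hres

end NonnegSelfAdjointCalculus

open Classical in
theorem statement8 (D : NonnegSelfAdjointCalculus 𝓗)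
    -- `P` a bounded operator on `ℋ`
    (P : 𝓗 →L[ℂ] 𝓗)
    -- `f ∈ C^∞(H)`
    (f : 𝓗) (hf : ∀ l : ℕ, D.H.IterMem l f)
    (t : ℝ) (ht : 0 < t) :
    -- conclusion, with `Φ^H_t(P) f = ∫_0^t e^{-sH} P e^{-(t-s)H} f ds` and
    -- `Φ^H_t(PH) f = ∫_0^t e^{-sH} P H e^{-(t-s)H} f ds`:
    ∃ h1 : (∫ s in (0 : ℝ)..t, D.expH s (P (D.expH (t - s) f))) ∈ D.H.domain,
      D.H ⟨∫ s in (0 : ℝ)..t, D.expH s (P (D.expH (t - s) f)), h1⟩ =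
          -(D.expH t (P f)) +
            (∫ s in (0 : ℝ)..t,
              if h : D.expH (t - s) f ∈ D.H.domain then
                D.expH s (P (D.H ⟨D.expH (t - s) f, h⟩)) else 0) +
            P (D.expH t f) ∧
        (D.H.IterMem 2 (∫ s in (0 : ℝ)..t, D.expH s (P (D.expH (t - s) f))) ↔
          P (D.expH t f) ∈ D.H.domain) := by
  obtain ⟨hf1, hf2', -⟩ := hf 2
  obtain ⟨h1, heq⟩ := D.main P hf1 ht
  obtain ⟨h2, -⟩ := D.main P hf2' ht
  have hdite : (∫ s in (0 : ℝ)..t,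
      if h : D.expH (t - s) f ∈ D.H.domain then
        D.expH s (P (D.H ⟨D.expH (t - s) f, h⟩)) else 0)
      = ∫ s in (0 : ℝ)..t, D.expH s (P (D.expH (t - s) (D.H ⟨f, hf1⟩))) := by
    apply intervalIntegral.integral_congr
    intro s hs
    obtain ⟨hm, hcomm⟩ := D.expH_comm_H (t - s) hf1
    simp only [dif_pos hm]
    exact congrArg (fun z => D.expH s (P z)) hcomm
  have hexp : D.expH t (P f) ∈ D.H.domain := D.expH_mem_domain t ht (P f)
  refine ⟨h1, ?_, ?_⟩
  · rw [hdite]; exact heq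
  · constructor
    · rintro ⟨hm, hm2, -⟩
      have hm2' : (-(D.expH t (P f)) +
          (∫ s in (0 : ℝ)..t, D.expH s (P (D.expH (t - s) (D.H ⟨f, hf1⟩)))) +
          P (D.expH t f)) ∈ D.H.domain := by
        rw [← heq]; exact hm2
      have hsub := Submodule.sub_mem _ (Submodule.sub_mem _ hm2'
        (Submodule.neg_mem _ hexp)) h2
      have habel : (-(D.expH t (P f)) +
          (∫ s in (0 : ℝ)..t, D.expH s (P (D.expH (t - s) (D.H ⟨f, hf1⟩)))) +
          P (D.expH t f)) - (-(D.expH t (P f)))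
          - (∫ s in (0 : ℝ)..t, D.expH s (P (D.expH (t - s) (D.H ⟨f, hf1⟩))))
          = P (D.expH t f) := by abel
      rwa [habel] at hsub
    · intro hc
      refine ⟨h1, ?_, trivial⟩
      rw [heq]
      exact Submodule.add_mem _ (Submodule.add_mem _ (Submodule.neg_mem _ hexp) h2) hc
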